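/- Let B = (M, N, E) be a bipartite graph with |M| = |N| = r, every vertex of N having degree 2 or 3, and let G be the intersection-style graph whose maximal cliques are: K_i = {X_i} ∪ {A_{sj} : m_s n_j ∈ E, s ≤ i} for each i ≤ r; K'_j = {Y_j} ∪ {A_{ij} : m_i n_j ∈ E} for each j ≤ r; and K''_j = {Z_j} ∪ {A_{ij} : m_i n_j ∈ E} for each j with d(n_j) = 3. Then G is a rooted directed path graph: there is a rooted directed tree on its maximal cliques such that for every vertex v of G, the cliques containing v induce a directed path. -/

import Mathlib

/-- The vertex type of the graph `G` constructed from the bipartite graph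
`B = (M, N, E)` (with `E i j` meaning `m_i n_j ∈ E`): the vertices `X_i`, `Y_j`,
`Z_j` (only for `j` with `d(n_j) = 3`) and `A_{ij}` (only for edges `m_i n_j`). -/
def Vtx (r : ℕ) (E : Fin r → Fin r → Prop) : Type :=
  {v : Fin r ⊕ Fin r ⊕ Fin r ⊕ Fin r × Fin r //
    match v with
    | Sum.inl _ => True
    | Sum.inr (Sum.inl _) => True
    | Sum.inr (Sum.inr (Sum.inl j)) => {i : Fin r | E i j}.ncard = 3
    | Sum.inr (Sum.inr (Sum.inr (i, j))) => E i j}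

/-- The vertex `X_i`. -/
def Xv {r : ℕ} {E : Fin r → Fin r → Prop} (i : Fin r) : Vtx r E :=
  ⟨Sum.inl i, trivial⟩

/-- The vertex `Y_j`. -/
def Yv {r : ℕ} {E : Fin r → Fin r → Prop} (j : Fin r) : Vtx r E :=
  ⟨Sum.inr (Sum.inl j), trivial⟩

/-- The vertex `Z_j`, present when `d(n_j) = 3`. -/
def Zv {r : ℕ} {E : Fin r → Fin r → Prop} (j : Fin r)
    (hj : {i : Fin r | E i j}.ncard = 3) : Vtx r E :=
  ⟨Sum.inr (Sum.inr (Sum.inl j)), hj⟩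

/-- The vertex `A_{ij}`, present when `m_i n_j ∈ E`. -/
def Av {r : ℕ} {E : Fin r → Fin r → Prop} (i j : Fin r) (h : E i j) : Vtx r E :=
  ⟨Sum.inr (Sum.inr (Sum.inr (i, j))), h⟩

/-- Membership in the clique `K_s = {X_s} ∪ {A_{ij} : m_i n_j ∈ E, i ≤ s}`. -/
def inK {r : ℕ} {E : Fin r → Fin r → Prop} (s : Fin r) (v : Vtx r E) : Prop :=
  match v.val with
  | Sum.inl s' => s' = s
  | Sum.inr (Sum.inr (Sum.inr (i, _))) => i ≤ s
  | _ => False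

/-- Membership in the clique `K'_j = {Y_j} ∪ {A_{ij} : m_i n_j ∈ E}`. -/
def inK' {r : ℕ} {E : Fin r → Fin r → Prop} (j : Fin r) (v : Vtx r E) : Prop :=
  match v.val with
  | Sum.inr (Sum.inl j') => j' = j
  | Sum.inr (Sum.inr (Sum.inr (_, j'))) => j' = j
  | _ => False

/-- Membership in the clique `K''_j = {Z_j} ∪ {A_{ij} : m_i n_j ∈ E}`
(a clique of `G` only when `d(n_j) = 3`). -/
def inK'' {r : ℕ} {E : Fin r → Fin r → Prop} (j : Fin r) (v : Vtx r E) : Prop :=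
  match v.val with
  | Sum.inr (Sum.inr (Sum.inl j')) => j' = j
  | Sum.inr (Sum.inr (Sum.inr (_, j'))) => j' = j
  | _ => False

/-- The graph `G` of the reduction: two distinct vertices are adjacent iff they
lie in a common clique `K_s`, `K'_j`, or `K''_j` (the latter for `d(n_j) = 3`). -/
def Gr (r : ℕ) (E : Fin r → Fin r → Prop) : SimpleGraph (Vtx r E) :=
  SimpleGraph.fromRel (fun u v =>
    (∃ s, inK s u ∧ inK s v) ∨ (∃ j, inK' j u ∧ inK' j v) ∨
      (∃ j, {i : Fin r | E i j}.ncard = 3 ∧ inK'' j u ∧ inK'' j v))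

instance {r : ℕ} {E : Fin r → Fin r → Prop} : DecidableEq (Vtx r E) := by
  unfold Vtx; infer_instance

/-- The set of (indices of) maximal cliques of `G`: the cliques `K_i` (left),
`K'_j` (middle), and `K''_j` for `j` with `d(n_j) = 3` (right). -/
def CT (r : ℕ) (E : Fin r → Fin r → Prop) : Type :=
  Fin r ⊕ Fin r ⊕ {j : Fin r // {i : Fin r | E i j}.ncard = 3}

/-- The clique of `G` corresponding to an index in `CT`. -/
def cliqueOf {r : ℕ} {E : Fin r → Fin r → Prop} : CT r E → (Vtx r E → Prop)
  | Sum.inl i => inK i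
  | Sum.inr (Sum.inl j) => inK' j
  | Sum.inr (Sum.inr j) => inK'' j.val

/-- A set `s` of vertices induces a directed path for the arc relation `A` if its
elements can be listed without repetition as `v₀, v₁, …, v_k` such that consecutive
elements are joined by an arc and every arc between elements of `s` joins
consecutive elements of the list. -/
def IsDirPathOn {W : Type*} (A : W → W → Prop) (s : Set W) : Prop :=
  ∃ l : List W, l.Nodup ∧ (∀ x, x ∈ l ↔ x ∈ s) ∧ l.Chain' A ∧
    ∀ x ∈ s, ∀ y ∈ s, A x y → ∃ n, l[n]? = some x ∧ l[n + 1]? = some y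


namespace Stmt8

open SimpleGraph

/-! ### Generic lemmas about graphs defined by a parent function -/

section Generic

variable {W : Type*} (parent : W → W) (root : W) (rank : W → ℕ)

/-- The arc relation of a rooted directed tree given by a parent function. -/
def ArcOf (u v : W) : Prop := v ≠ root ∧ u = parent v

variable (hrank : ∀ v : W, v ≠ root → rank (parent v) < rank v)

include hrank

lemma par_ne {v : W} (hv : v ≠ root) : parent v ≠ v := by
  intro h
  have := hrank v hv
  rw [h] at this
  exact lt_irrefl _ this

lemma adj_fromRel {v : W} (hv : v ≠ root) :
    (SimpleGraph.fromRel (ArcOf parent root)).Adj (parent v) v := by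
  rw [SimpleGraph.fromRel_adj]
  exact ⟨par_ne parent root rank hrank hv, Or.inl ⟨hv, rfl⟩⟩

lemma connected_fromRel :
    (SimpleGraph.fromRel (ArcOf parent root)).Connected := by
  set G := SimpleGraph.fromRel (ArcOf parent root) with hG
  have key : ∀ (n : ℕ) (v : W), rank v ≤ n → G.Reachable root v := by
    intro n
    induction n with
    | zero =>
      intro v h
      by_cases hv : v = root
      · subst hv; rfl
      · exact absurd (lt_of_lt_of_le (hrank v hv) h) (Nat.not_lt_zero _)
    | succ n ih =>
      intro v h
      by_cases hv : v = root
      · subst hv; rfl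
      · have h1 := hrank v hv
        have h2 : rank (parent v) ≤ n := by omega
        exact (ih _ h2).trans (adj_fromRel parent root rank hrank hv).reachable
  haveI : Nonempty W := ⟨root⟩
  exact ⟨fun u v => (key _ u le_rfl).symm.trans (key _ v le_rfl)⟩

lemma acyclic_aux {x u : W} (hadj : (SimpleGraph.fromRel (ArcOf parent root)).Adj x u)
    (hle : rank u ≤ rank x) : x ≠ root ∧ u = parent x := by
  rw [SimpleGraph.fromRel_adj] at hadj
  rcases hadj.2 with ⟨hu, hx⟩ | h
  · exfalso
    have := hrank u hu
    rw [← hx] at this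
    omega
  · exact h

lemma acyclic_fromRel :
    (SimpleGraph.fromRel (ArcOf parent root)).IsAcyclic := by
  classical
  set G := SimpleGraph.fromRel (ArcOf parent root) with hG
  have aux : ∀ (x : W) (c : G.Walk x x), c.IsCycle →
      (∀ y ∈ c.support.tail, rank y ≤ rank x) → False := by
    intro x c hc hmax
    cases c with
    | nil => exact hc.not_of_nil
    | @cons _ u _ hadj q =>
      have hu : u ∈ (SimpleGraph.Walk.cons hadj q).support.tail := by
        simp [SimpleGraph.Walk.support_cons]
      have hqdne : q.darts ≠ [] := by
        have h3 := hc.three_le_length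
        have hl : q.darts.length = q.length := q.length_darts
        simp only [SimpleGraph.Walk.length_cons] at h3
        intro hnil
        rw [hnil] at hl
        simp at hl
        omega
      set d := q.darts.getLast hqdne with hd
      have hdsnd : d.snd = x := by rw [hd]; simp
      have hdmem : d ∈ q.darts := List.getLast_mem hqdne
      have hdfst : d.fst ∈ (SimpleGraph.Walk.cons hadj q).support.tail := by
        simp only [SimpleGraph.Walk.support_cons, List.tail_cons]
        exact q.dart_fst_mem_support_of_mem_darts hdmem
      -- orientation of the two edges at x
      have h1 : x ≠ root ∧ u = parent x :=
        acyclic_aux parent root rank hrank hadj (hmax u hu)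
      have hdadj : G.Adj x d.fst := by
        have := d.adj
        rw [hdsnd] at this
        exact (SimpleGraph.fromRel_adj _ _ _).2
          ⟨((SimpleGraph.fromRel_adj _ _ _).1 this).1.symm,
           (((SimpleGraph.fromRel_adj _ _ _).1 this).2).symm⟩
      have h2 : x ≠ root ∧ d.fst = parent x :=
        acyclic_aux parent root rank hrank hdadj (hmax _ hdfst)
      have hufst : d.fst = u := by rw [h2.2, ← h1.2]
      -- the first and last edges of the cycle coincide, contradicting trail
      have htrail := hc.isCircuit.isTrail
      rw [SimpleGraph.Walk.isTrail_cons] at htrail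
      apply htrail.2
      have : d.edge ∈ q.edges := by
        rw [SimpleGraph.Walk.edges]
        exact List.mem_map_of_mem hdmem
      have hedge : d.edge = s(x, u) := by
        show s(d.fst, d.snd) = s(x, u)
        rw [hdsnd, hufst, Sym2.eq_swap]
      rwa [hedge] at this
  intro v c hc
  -- choose a vertex of maximal rank on the cycle and rotate
  have htne : c.support.tail ≠ [] := by
    have h3 := hc.three_le_length
    have : c.support.tail.length = c.length := by
      have := c.length_support
      cases hs : c.support with
      | nil => exact absurd hs c.support_ne_nil
      | cons a l => rw [hs] at this; simp at this ⊢; omega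
    intro hnil
    rw [hnil] at this
    simp at this
    omega
  have hfne : c.support.tail.toFinset.Nonempty := by
    rwa [List.toFinset_nonempty_iff  ]
  obtain ⟨x, hxmem, hxmax⟩ := Finset.exists_max_image c.support.tail.toFinset rank hfne
  rw [List.mem_toFinset] at hxmem
  have hx' : x ∈ c.support := List.mem_of_mem_tail hxmem
  have hperm := c.support_rotate x hx'
  exact aux x (c.rotate x hx') (hc.rotate hx')
    (fun y hy => hxmax y (List.mem_toFinset.2 (hperm.mem_iff.1 hy)))

lemma isDirPathOn_of_chain (l : List W)
    (hchain : l.Chain' (ArcOf parent root))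
    (hhead : ∀ x, l.head? = some x → x ≠ root → parent x ∉ l)
    (S : Set W) (hS : ∀ x, x ∈ l ↔ x ∈ S) :
    IsDirPathOn (ArcOf parent root) S := by
  refine ⟨l, ?_, hS, hchain, ?_⟩
  · -- Nodup via strictly increasing rank
    have hlt : l.Chain' (fun u v => rank u < rank v) :=
      List.IsChain.imp (fun {u v} h => by rw [h.2]; exact hrank v h.1) hchain
    haveI : IsTrans W (fun u v => rank u < rank v) := ⟨fun _ _ _ => lt_trans⟩
    have hp := List.isChain_iff_pairwise.mp hlt
    exact hp.imp (fun {a b} h => fun hab => by subst hab; exact lt_irrefl _ h)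
  · intro x hx y hy hxy
    obtain ⟨hyroot, hxpar⟩ := hxy
    have hyl : y ∈ l := (hS y).2 hy
    obtain ⟨⟨n, hn⟩, hget⟩ := List.mem_iff_get.mp hyl
    match n, hn, hget with
    | 0, hn, hget =>
      exfalso
      have hhd : l.head? = some y := by
        cases l with
        | nil => simp at hn
        | cons a t => simp only [List.get] at hget; rw [hget]; rfl
      exact hhead y hhd hyroot (by rw [← hxpar]; exact (hS x).2 hx)
    | (k+1), hn, hget =>
      refine ⟨k, ?_, ?_⟩
      · have hcg := List.isChain_iff_getElem.mp hchain k (by omega)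
        have : l.get ⟨k, by omega⟩ = parent y := by
          rw [← hget] at hyroot ⊢
          exact hcg.2
        rw [hxpar, ← this]; exact List.getElem?_eq_getElem _
      · rw [← hget]; exact List.getElem?_eq_getElem hn

end Generic

/-! ### The specific parent structure on the cliques -/

variable {r : ℕ} {E : Fin r → Fin r → Prop}

/-- Parent function on the clique tree. -/
def par : CT r E → CT r E
  | Sum.inl i => Sum.inl ⟨i.val - 1, by have := i.isLt; omega⟩
  | Sum.inr (Sum.inl j) => Sum.inl ⟨r - 1, by have := j.isLt; omega⟩
  | Sum.inr (Sum.inr j) => Sum.inr (Sum.inl j.val)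

/-- Rank function on the clique tree. -/
def rk : CT r E → ℕ
  | Sum.inl i => i.val
  | Sum.inr (Sum.inl _) => r
  | Sum.inr (Sum.inr _) => r + 1

/-- The root of the clique tree. -/
def rt (hr : 0 < r) : CT r E := Sum.inl ⟨0, hr⟩

lemma rk_par (hr : 0 < r) : ∀ v : CT r E, v ≠ rt hr → rk (par v) < rk v := by
  intro v hv
  match v with
  | Sum.inl i =>
    have : i.val ≠ 0 := by
      intro h
      exact hv (by simp only [rt]; congr 1; exact Fin.ext h)
    simp only [par, rk]
    omega
  | Sum.inr (Sum.inl j) =>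
    simp only [par, rk]
    omega
  | Sum.inr (Sum.inr j) =>
    simp only [par, rk]
    omega

end Stmt8


/-- The graph `G` of the reduction is a rooted directed path graph: there is a
rooted directed tree on its maximal cliques (underlying graph a tree, with exactly
one vertex of in-degree zero) such that for every vertex `v` of `G`, the cliques
containing `v` induce a directed path. -/
theorem stmt_8 (r : ℕ) (hr : 2 ≤ r) (E : Fin r → Fin r → Prop)
    (hdeg : ∀ j : Fin r, {i : Fin r | E i j}.ncard = 2 ∨ {i : Fin r | E i j}.ncard = 3) :
    ∃ A : CT r E → CT r E → Prop,
      (SimpleGraph.fromRel A).IsTree ∧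
      (∃! c : CT r E, {u : CT r E | A u c} = ∅) ∧
      ∀ v : Vtx r E, IsDirPathOn A {c : CT r E | cliqueOf c v} := by
  classical
  have hr0 : 0 < r := by omega
  set rt0 : CT r E := Stmt8.rt hr0 with hrt0
  have hrk := Stmt8.rk_par (E := E) hr0
  refine ⟨Stmt8.ArcOf Stmt8.par rt0,
    ⟨Stmt8.connected_fromRel _ _ Stmt8.rk hrk, Stmt8.acyclic_fromRel _ _ Stmt8.rk hrk⟩,
    ⟨rt0, ?_, ?_⟩, ?_⟩
  · ext u
    simp only [Set.mem_setOf_eq, Set.mem_empty_iff_false, iff_false]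
    rintro ⟨hne, -⟩
    exact hne rfl
  · intro c hc
    by_contra hne
    have : Stmt8.par c ∈ {u : CT r E | Stmt8.ArcOf Stmt8.par rt0 u c} := ⟨hne, rfl⟩
    rw [hc] at this
    exact this
  · -- the directed-path condition for each vertex
    intro v
    obtain ⟨val, hval⟩ := v
    -- helper for singleton clique sets
    have single : ∀ (c : CT r E) (S : Set (CT r E)), (∀ x, x ∈ [c] ↔ x ∈ S) →
        IsDirPathOn (Stmt8.ArcOf Stmt8.par rt0) S := by
      intro c S hS
      refine Stmt8.isDirPathOn_of_chain Stmt8.par rt0 Stmt8.rk hrk [c]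
        (List.isChain_singleton c) ?_ S hS
      intro x hx hxr hmem
      simp only [List.head?_cons, Option.some.injEq] at hx
      subst hx
      simp only [List.mem_singleton] at hmem
      exact Stmt8.par_ne Stmt8.par rt0 Stmt8.rk hrk hxr hmem
    rcases val with i | j | j | ⟨i, j⟩
    · -- X_i : only clique K_i
      refine single (Sum.inl i) _ ?_
      intro x
      rcases x with s | j' | ⟨j', h'⟩
      · unfold CT
        simp only [List.mem_singleton, Set.mem_setOf_eq, cliqueOf, inK]
        exact ⟨fun h => (Sum.inl.inj h).symm, fun h => by rw [h]⟩
      · unfold CT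
        simp only [List.mem_singleton, Set.mem_setOf_eq, cliqueOf, inK', iff_false]
        exact fun h => nomatch h
      · unfold CT
        simp only [List.mem_singleton, Set.mem_setOf_eq, cliqueOf, inK'', iff_false]
        exact fun h => nomatch h
    · -- Y_j : only clique K'_j
      refine single (Sum.inr (Sum.inl j)) _ ?_
      intro x
      rcases x with s | j' | ⟨j', h'⟩
      · unfold CT
        simp only [List.mem_singleton, Set.mem_setOf_eq, cliqueOf, inK, iff_false]
        exact fun h => nomatch h
      · unfold CT
        simp only [List.mem_singleton, Set.mem_setOf_eq, cliqueOf, inK']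
        exact ⟨fun h => (Sum.inl.inj (Sum.inr.inj h)).symm, fun h => by rw [h]⟩
      · unfold CT
        simp only [List.mem_singleton, Set.mem_setOf_eq, cliqueOf, inK'', iff_false]
        exact fun h => nomatch h
    · -- Z_j : only clique K''_j
      have hj3 : {i : Fin r | E i j}.ncard = 3 := hval
      refine single (Sum.inr (Sum.inr ⟨j, hj3⟩)) _ ?_
      intro x
      rcases x with s | j' | ⟨j', h'⟩
      · unfold CT
        simp only [List.mem_singleton, Set.mem_setOf_eq, cliqueOf, inK, iff_false]
        exact fun h => nomatch h
      · unfold CT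
        simp only [List.mem_singleton, Set.mem_setOf_eq, cliqueOf, inK', iff_false]
        exact fun h => nomatch h
      · unfold CT
        simp only [List.mem_singleton, Set.mem_setOf_eq, cliqueOf, inK'']
        constructor
        · intro h
          exact (congrArg Subtype.val (Sum.inr.inj (Sum.inr.inj h))).symm
        · intro h
          subst h
          rfl
    · -- A_{ij} : cliques K_i, …, K_{r-1}, K'_j (and K''_j when d(n_j)=3)
      have hE' : E i j := hval
      have hir := i.isLt
      set l0 : List (CT r E) :=
        List.ofFn (fun t : Fin (r - i.val) =>
          (Sum.inl ⟨i.val + t.val, by have := t.isLt; omega⟩ : CT r E)) with hl0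
      have hl0len : l0.length = r - i.val := by erw [hl0, List.length_ofFn]
      have hl0get : ∀ k, ∀ hk : k < r - i.val,
          l0[k]? = some (Sum.inl ⟨i.val + k, by omega⟩ : CT r E) := by
        intro k hk
        erw [hl0, List.getElem?_ofFn, dif_pos hk]; rfl
      have hl0mem : ∀ x : CT r E, x ∈ l0 ↔ ∃ s : Fin r, i ≤ s ∧ x = Sum.inl s := by
        intro x
        erw [hl0, List.mem_ofFn]
        constructor
        · rintro ⟨t, rfl⟩
          exact ⟨⟨i.val + t.val, by have := t.isLt; omega⟩,
            by rw [Fin.le_def]; exact Nat.le_add_right _ _, rfl⟩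
        · rintro ⟨s, hs, rfl⟩
          rw [Fin.le_def] at hs
          refine ⟨⟨s.val - i.val, by have := s.isLt; omega⟩, ?_⟩
          exact congrArg Sum.inl (Fin.ext (show i.val + (s.val - i.val) = s.val by omega))
      have hl0chain : l0.Chain' (Stmt8.ArcOf Stmt8.par rt0) := by
        rw [hl0]; show List.IsChain _ (List.ofFn _); erw [List.isChain_ofFn]
        intro t ht
        refine ⟨?_, ?_⟩
        · intro hcon
          rw [hrt0, Stmt8.rt] at hcon
          exact absurd (congrArg Fin.val (Sum.inl.inj hcon))
            (show ¬(i.val + (t + 1) = 0) by omega)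
        · exact congrArg Sum.inl (Fin.ext
            (show i.val + t = i.val + (t + 1) - 1 by omega))
      have hl0ne : l0 ≠ [] := by
        intro h
        rw [h] at hl0len
        simp only [List.length_nil] at hl0len
        omega
      have hl0head : l0.head? = some (Sum.inl ⟨i.val, hir⟩ : CT r E) := by
        rw [List.head?_eq_getElem?, hl0get 0 (by omega)]
        exact congrArg Option.some (congrArg Sum.inl (Fin.ext
          (show i.val + 0 = i.val by omega)))
      have hl0last : l0.getLast? = some (Sum.inl ⟨r - 1, by omega⟩ : CT r E) := by
        rw [List.getLast?_eq_getElem?, hl0len, hl0get (r - i.val - 1) (by omega)]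
        exact congrArg Option.some (congrArg Sum.inl (Fin.ext
          (show i.val + (r - i.val - 1) = r - 1 by omega)))
      -- the arc from K_{r-1} to K'_j
      have harc1 : Stmt8.ArcOf Stmt8.par rt0 (Sum.inl ⟨r - 1, by omega⟩)
          (Sum.inr (Sum.inl j) : CT r E) := by
        refine ⟨?_, rfl⟩
        rw [hrt0, Stmt8.rt]
        exact fun h => nomatch h
      -- head condition for any list of the shape l0 ++ tail
      have hheadgen : ∀ (tail : List (CT r E)), (∀ y ∈ tail, ∃ w, y = Sum.inr w) →
          ∀ x : CT r E, (l0 ++ tail).head? = some x → x ≠ rt0 →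
            Stmt8.par x ∉ l0 ++ tail := by
        intro tail htail x hx hxr hmem
        erw [List.head?_append_of_ne_nil _ hl0ne, hl0head, Option.some.injEq] at hx
        subst hx
        have hine : i.val ≠ 0 := by
          intro h
          apply hxr
          rw [hrt0, Stmt8.rt]
          exact congrArg Sum.inl (Fin.ext h)
        rw [List.mem_append] at hmem
        rcases hmem with hmem | hmem
        · rw [hl0mem] at hmem
          obtain ⟨s, hs, hmem⟩ := hmem
          rw [Fin.le_def] at hs
          have hv := congrArg Fin.val (Sum.inl.inj hmem)
          have hv' : i.val - 1 = s.val := hv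
          omega
        · obtain ⟨w, hw⟩ := htail _ hmem
          exact nomatch hw
      rcases hdeg j with h2 | h3
      · -- degree 2 : cliques are K_i,…,K_{r-1},K'_j
        refine Stmt8.isDirPathOn_of_chain Stmt8.par rt0 Stmt8.rk hrk
          (l0 ++ ([Sum.inr (Sum.inl j)] : List (CT r E))) ?_ ?_ _ ?_
        · show List.IsChain _ _; rw [List.isChain_append]
          refine ⟨hl0chain, List.isChain_singleton _, ?_⟩
          intro x hx y hy
          rw [hl0last] at hx
          replace hx := Option.some.inj (Option.mem_def.1 hx)
          replace hy := Option.some.inj (Option.mem_def.1 hy)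
          subst hx; subst hy
          exact harc1
        · refine hheadgen _ ?_
          rintro y hy
          replace hy := List.mem_singleton.1 hy
          exact ⟨_, hy⟩
        · intro x
          rw [List.mem_append, hl0mem]
          rcases x with s | j' | ⟨j', h'⟩
          · unfold CT
            simp only [List.mem_singleton, Set.mem_setOf_eq, cliqueOf, inK]
            constructor
            · rintro (⟨s', hs', hss⟩ | hmem)
              · cases Sum.inl.inj hss
                exact hs'
              · exact nomatch hmem
            · intro h
              exact Or.inl ⟨s, h, rfl⟩
          · unfold CT
            simp only [List.mem_singleton, Set.mem_setOf_eq, cliqueOf, inK']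
            constructor
            · rintro (⟨s, -, hs⟩ | hmem)
              · exact nomatch hs
              · exact (Sum.inl.inj (Sum.inr.inj hmem)).symm
            · intro h
              exact Or.inr (by rw [h])
          · unfold CT
            simp only [List.mem_singleton, Set.mem_setOf_eq, cliqueOf, inK'']
            constructor
            · rintro (⟨s, -, hs⟩ | hmem)
              · exact nomatch hs
              · exact nomatch hmem
            · intro h
              rw [← h] at h'
              rw [h'] at h2
              omega
      · -- degree 3 : cliques are K_i,…,K_{r-1},K'_j,K''_j
        refine Stmt8.isDirPathOn_of_chain Stmt8.par rt0 Stmt8.rk hrk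
          (l0 ++ ([Sum.inr (Sum.inl j), Sum.inr (Sum.inr ⟨j, h3⟩)] : List (CT r E))) ?_ ?_ _ ?_
        · show List.IsChain _ _; rw [List.isChain_append]
          refine ⟨hl0chain, ?_, ?_⟩
          · refine List.isChain_cons_cons.2 ⟨⟨?_, rfl⟩, List.isChain_singleton _⟩
            rw [hrt0, Stmt8.rt]
            exact fun h => nomatch h
          · intro x hx y hy
            rw [hl0last] at hx
            replace hx := Option.some.inj (Option.mem_def.1 hx)
            replace hy := Option.some.inj (Option.mem_def.1 hy)
            subst hx; subst hy
            exact harc1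
        · refine hheadgen _ ?_
          rintro y hy
          replace hy := (List.mem_cons.1 hy).imp_right List.mem_singleton.1
          rcases hy with hy | hy <;> exact ⟨_, hy⟩
        · intro x
          rw [List.mem_append, hl0mem]
          rcases x with s | j' | ⟨j', h'⟩
          · unfold CT
            simp only [List.mem_cons, List.mem_singleton, List.not_mem_nil, or_false,
              Set.mem_setOf_eq, cliqueOf, inK]
            constructor
            · rintro (⟨s', hs', hss⟩ | hmem | hmem)
              · cases Sum.inl.inj hss
                exact hs'
              · exact nomatch hmem
              · exact nomatch hmem
            · intro h
              exact Or.inl ⟨s, h, rfl⟩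
          · unfold CT
            simp only [List.mem_cons, List.mem_singleton, List.not_mem_nil, or_false,
              Set.mem_setOf_eq, cliqueOf, inK']
            constructor
            · rintro (⟨s, -, hs⟩ | hmem | hmem)
              · exact nomatch hs
              · exact (Sum.inl.inj (Sum.inr.inj hmem)).symm
              · exact nomatch hmem
            · intro h
              exact Or.inr (Or.inl (by rw [h]))
          · unfold CT
            simp only [List.mem_cons, List.mem_singleton, List.not_mem_nil, or_false,
              Set.mem_setOf_eq, cliqueOf, inK'']
            constructor
            · rintro (⟨s, -, hs⟩ | hmem | hmem)
              · exact nomatch hs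
              · exact nomatch hmem
              · exact (congrArg Subtype.val (Sum.inr.inj (Sum.inr.inj hmem))).symm
            · intro h
              subst h
              exact Or.inr (Or.inr rfl)
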